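/- (Breakdown of Gl-QGMRES is equivalent to exactness.) Let A ∈ ℍ^{n×n} be invertible, let B, X₀ ∈ ℍ^{n×m}, R₀ := B − A X₀, β := ‖R₀‖ > 0, V₁ := R₀ β^{-1}, and assume the Arnoldi hypotheses through step k−1 (no breakdown before step k). Define h_{i,k} = tr(V_i^*(A V_k)) for i = 1, …, k and W_k := A V_k − Σ_{i=1}^k V_i h_{i,k}. Then W_k = 0 (breakdown at step k) if and only if there exists y ∈ ℍ^k such that A(X₀ + Σ_{j=1}^k V_j y_j) = B; in particular, when W_k = 0 the k×k quaternion matrix H_k = (h_{i,j}) (with h_{i,j} := 0 for i > j+1) is invertible and the exact solution is X_k = X₀ + Σ_{j=1}^k V_j y_j with y = β H_k^{-1} e₁. -/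
import Mathlib


open Matrix Quaternion

noncomputable section

/-- Entrywise right scalar multiple of a quaternion matrix. -/
def qsmul {n m : ℕ} (X : Matrix (Fin n) (Fin m) ℍ[ℝ]) (a : ℍ[ℝ]) :
    Matrix (Fin n) (Fin m) ℍ[ℝ] := fun i j => X i j * a

/-- Frobenius norm of a quaternion matrix: `‖X‖ = (Re tr(X^* X))^{1/2}`. -/
def qnorm {n m : ℕ} (X : Matrix (Fin n) (Fin m) ℍ[ℝ]) : ℝ :=
  Real.sqrt (Matrix.trace (Xᴴ * X)).re

/-- The Arnoldi hypotheses through step `k`. -/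
structure ArnoldiData (n m k : ℕ) (A : Matrix (Fin n) (Fin n) ℍ[ℝ])
    (V : ℕ → Matrix (Fin n) (Fin m) ℍ[ℝ]) (h : ℕ → ℕ → ℍ[ℝ]) : Prop where
  normV1 : qnorm (V 1) = 1
  hdef : ∀ j ∈ Finset.Icc 1 k, ∀ i ∈ Finset.Icc 1 j,
      h i j = Matrix.trace ((V i)ᴴ * (A * V j))
  hsub : ∀ j ∈ Finset.Icc 1 k,
      h (j+1) j = (qnorm (A * V j - ∑ i ∈ Finset.Icc 1 j, qsmul (V i) (h i j)) : ℍ[ℝ])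
  hsub_ne : ∀ j ∈ Finset.Icc 1 k, h (j+1) j ≠ 0
  vdef : ∀ j ∈ Finset.Icc 1 k,
      V (j+1) = qsmul (A * V j - ∑ i ∈ Finset.Icc 1 j, qsmul (V i) (h i j)) (h (j+1) j)⁻¹

namespace QGaux

variable {n m : ℕ}

/-- inner product -/
def ip (X Y : Matrix (Fin n) (Fin m) ℍ[ℝ]) : ℍ[ℝ] := Matrix.trace (Xᴴ * Y)

lemma ip_def (X Y : Matrix (Fin n) (Fin m) ℍ[ℝ]) : ip X Y = Matrix.trace (Xᴴ * Y) := rfl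

lemma qsmul_apply (X : Matrix (Fin n) (Fin m) ℍ[ℝ]) (a : ℍ[ℝ]) (i j) :
    qsmul X a i j = X i j * a := rfl

lemma qsmul_one (X : Matrix (Fin n) (Fin m) ℍ[ℝ]) : qsmul X 1 = X := by
  funext i j; simp [qsmul]

lemma qsmul_zero (X : Matrix (Fin n) (Fin m) ℍ[ℝ]) : qsmul X 0 = 0 := by
  funext i j; simp [qsmul]

lemma qsmul_qsmul (X : Matrix (Fin n) (Fin m) ℍ[ℝ]) (a b : ℍ[ℝ]) :
    qsmul (qsmul X a) b = qsmul X (a * b) := by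
  funext i j; simp [qsmul, mul_assoc]

lemma mul_qsmul {p : ℕ} (A : Matrix (Fin p) (Fin n) ℍ[ℝ])
    (X : Matrix (Fin n) (Fin m) ℍ[ℝ]) (a : ℍ[ℝ]) :
    A * qsmul X a = qsmul (A * X) a := by
  funext i j
  simp [qsmul, Matrix.mul_apply, Finset.sum_mul, mul_assoc]

lemma qsmul_sum_right {ι : Type*} (s : Finset ι) (X : Matrix (Fin n) (Fin m) ℍ[ℝ])
    (a : ι → ℍ[ℝ]) : ∑ i ∈ s, qsmul X (a i) = qsmul X (∑ i ∈ s, a i) := by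
  funext i j
  simp only [qsmul, Matrix.sum_apply, Finset.mul_sum]

lemma qsmul_sum_left {ι : Type*} (s : Finset ι) (X : ι → Matrix (Fin n) (Fin m) ℍ[ℝ])
    (a : ℍ[ℝ]) : qsmul (∑ i ∈ s, X i) a = ∑ i ∈ s, qsmul (X i) a := by
  funext i j
  simp only [qsmul, Matrix.sum_apply, Finset.sum_mul]

lemma ip_add_right (X Y Z : Matrix (Fin n) (Fin m) ℍ[ℝ]) :
    ip X (Y + Z) = ip X Y + ip X Z := by simp [ip, Matrix.mul_add]

lemma ip_sub_right (X Y Z : Matrix (Fin n) (Fin m) ℍ[ℝ]) :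
    ip X (Y - Z) = ip X Y - ip X Z := by simp [ip, Matrix.mul_sub]

lemma ip_zero_right (X : Matrix (Fin n) (Fin m) ℍ[ℝ]) : ip X 0 = 0 := by
  simp [ip]

lemma ip_sum_right {ι : Type*} (s : Finset ι) (X : Matrix (Fin n) (Fin m) ℍ[ℝ])
    (f : ι → Matrix (Fin n) (Fin m) ℍ[ℝ]) :
    ip X (∑ i ∈ s, f i) = ∑ i ∈ s, ip X (f i) := by
  simp [ip, Matrix.mul_sum]

lemma ip_qsmul_right (X Y : Matrix (Fin n) (Fin m) ℍ[ℝ]) (a : ℍ[ℝ]) :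
    ip X (qsmul Y a) = ip X Y * a := by
  simp [ip, Matrix.trace, Matrix.diag, Matrix.mul_apply, qsmul, Finset.sum_mul, mul_assoc]

lemma ip_qsmul_left (X Y : Matrix (Fin n) (Fin m) ℍ[ℝ]) (a : ℍ[ℝ]) :
    ip (qsmul X a) Y = star a * ip X Y := by
  simp [ip, Matrix.trace, Matrix.diag, Matrix.mul_apply, qsmul, Finset.mul_sum,
    Matrix.conjTranspose_apply, StarMul.star_mul, mul_assoc]

lemma ip_star (X Y : Matrix (Fin n) (Fin m) ℍ[ℝ]) : ip Y X = star (ip X Y) := by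
  rw [ip, ip, ← Matrix.trace_conjTranspose, Matrix.conjTranspose_mul,
    Matrix.conjTranspose_conjTranspose]

lemma ip_self_sum (X : Matrix (Fin n) (Fin m) ℍ[ℝ]) :
    ip X X = (((∑ j, ∑ i, normSq (X i j)) : ℝ) : ℍ[ℝ]) := by
  rw [ip]
  rw [show (((∑ j, ∑ i, normSq (X i j)) : ℝ) : ℍ[ℝ])
      = ∑ j, ∑ i, ((normSq (X i j) : ℝ) : ℍ[ℝ]) by
        rw [← Quaternion.algebraMap_def, map_sum]
        exact Finset.sum_congr rfl fun j _ => map_sum _ _ _]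
  simp [Matrix.trace, Matrix.diag, Matrix.mul_apply, Matrix.conjTranspose_apply,
    Quaternion.star_mul_self]

lemma qnorm_sq (X : Matrix (Fin n) (Fin m) ℍ[ℝ]) :
    (qnorm X) ^ 2 = ∑ j, ∑ i, normSq (X i j) := by
  have h1 : (Matrix.trace (Xᴴ * X)).re = ∑ j, ∑ i, normSq (X i j) := by
    have := ip_self_sum X
    rw [ip] at this
    rw [this, Quaternion.re_coe]
  rw [qnorm, h1, Real.sq_sqrt]
  exact Finset.sum_nonneg fun _ _ => Finset.sum_nonneg fun _ _ => normSq_nonneg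

lemma ip_self_coe (X : Matrix (Fin n) (Fin m) ℍ[ℝ]) :
    ip X X = (((qnorm X) ^ 2 : ℝ) : ℍ[ℝ]) := by
  rw [ip_self_sum, qnorm_sq]

lemma ip_self_eq_zero {X : Matrix (Fin n) (Fin m) ℍ[ℝ]} : ip X X = 0 ↔ X = 0 := by
  rw [ip_self_sum]
  constructor
  · intro h0
    have hs : (∑ j, ∑ i, normSq (X i j)) = 0 := by
      have := Quaternion.coe_injective (h0.trans (Quaternion.coe_zero).symm)
      exact this
    funext i j
    have : ∀ j ∈ Finset.univ (α := Fin m), (∑ i, normSq (X i j)) = 0 := by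
      intro j _
      have h' := (Finset.sum_eq_zero_iff_of_nonneg (fun j _ =>
        Finset.sum_nonneg fun i _ => normSq_nonneg)).mp hs
      exact h' j (Finset.mem_univ _)
    have h'' := (Finset.sum_eq_zero_iff_of_nonneg (fun i _ => normSq_nonneg)).mp
      (this j (Finset.mem_univ _)) i (Finset.mem_univ _)
    simpa [Quaternion.normSq_eq_zero] using h''
  · intro h0; subst h0; simp

lemma qnorm_zero : qnorm (0 : Matrix (Fin n) (Fin m) ℍ[ℝ]) = 0 := by
  simp [qnorm]

/-- sum over `Icc 1 k` equals sum over `Fin k` shifted. -/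
lemma sum_Icc_one {M : Type*} [AddCommMonoid M] (k : ℕ) (f : ℕ → M) :
    ∑ i ∈ Finset.Icc 1 k, f i = ∑ i : Fin k, f ((i : ℕ) + 1) := by
  rw [← Finset.Ico_add_one_right_eq_Icc, Finset.sum_Ico_eq_sum_range]
  rw [Fin.sum_univ_eq_sum_range (fun i => f ((i : ℕ) + 1))]
  exact Finset.sum_congr rfl fun i _ => by rw [add_comm]

lemma exists_right_inverse {k : ℕ} (M : Matrix (Fin k) (Fin k) ℍ[ℝ])
    (hinj : ∀ c, M *ᵥ c = 0 → c = 0) : ∃ C, M * C = 1 := by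
  let L : (Fin k → ℍ[ℝ]) →ₗ[ℝ] (Fin k → ℍ[ℝ]) :=
    { toFun := M.mulVec
      map_add' := fun x y => Matrix.mulVec_add M x y
      map_smul' := fun r x => M.mulVec_smul r x }
  have hLinj : Function.Injective L := by
    intro a b hab
    have h0 : M *ᵥ (a - b) = 0 := by
      have : L (a - b) = 0 := by rw [map_sub, hab, sub_self]
      exact this
    have := hinj _ h0
    exact sub_eq_zero.mp this
  have hs : Function.Surjective L := LinearMap.surjective_of_injective hLinj
  choose C hC using fun j : Fin k => hs (Pi.single j (1 : ℍ[ℝ]))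
  refine ⟨Matrix.of fun i j => C j i, ?_⟩
  funext i j
  have h1 := congrFun (hC j) i
  simp only [L, LinearMap.coe_mk, AddHom.coe_mk] at h1
  rw [Matrix.mul_apply, Matrix.one_apply]
  rw [Matrix.mulVec, dotProduct] at h1
  simp only [Matrix.of_apply]
  rw [h1, Pi.single_apply]

lemma isUnit_of_mulVec_inj {k : ℕ} (M : Matrix (Fin k) (Fin k) ℍ[ℝ])
    (hinj : ∀ c, M *ᵥ c = 0 → c = 0) : IsUnit M := by
  obtain ⟨C, hC⟩ := exists_right_inverse M hinj
  have hCinj : ∀ c, C *ᵥ c = 0 → c = 0 := by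
    intro c hc
    have : (M * C) *ᵥ c = M *ᵥ (C *ᵥ c) := (Matrix.mulVec_mulVec c M C).symm
    rw [hC, hc, Matrix.one_mulVec, Matrix.mulVec_zero] at this
    exact this
  obtain ⟨D, hD⟩ := exists_right_inverse C hCinj
  have hDM : D = M := by
    calc D = 1 * D := (Matrix.one_mul D).symm
    _ = (M * C) * D := by rw [hC]
    _ = M * (C * D) := Matrix.mul_assoc M C D
    _ = M := by rw [hD, Matrix.mul_one]
  exact ⟨⟨M, C, hC, hDM ▸ hD⟩, rfl⟩

end QGaux

open QGaux

/-- Breakdown of Gl-QGMRES is equivalent to exactness: with `A`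
invertible, `R₀ = B − A X₀`, `β = ‖R₀‖ > 0`, `V₁ = R₀ β⁻¹`, the Arnoldi hypotheses
through step `k − 1`, `h_{i,k} = tr(V_i^*(A V_k))` and
`W_k = A V_k − Σ_{i=1}^k V_i h_{i,k}`: breakdown `W_k = 0` holds if and only if some
`X₀ + Σ_{j=1}^k V_j y_j` solves `A X = B`; in that case the upper Hessenberg matrix
`H_k` is invertible and `X_k = X₀ + 𝒱_k * (β H_k^{-1} e₁)` is the exact solution. -/
theorem glqgmres_breakdown_iff_exact (n m k : ℕ) (hk : 1 ≤ k)
    (A : Matrix (Fin n) (Fin n) ℍ[ℝ]) (hAinv : IsUnit A)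
    (B X₀ : Matrix (Fin n) (Fin m) ℍ[ℝ])
    (R₀ : Matrix (Fin n) (Fin m) ℍ[ℝ]) (hR₀ : R₀ = B - A * X₀)
    (β : ℝ) (hβ : β = qnorm R₀) (hβpos : 0 < β)
    (V : ℕ → Matrix (Fin n) (Fin m) ℍ[ℝ]) (hV1 : V 1 = qsmul R₀ ((β : ℍ[ℝ])⁻¹))
    (h : ℕ → ℕ → ℍ[ℝ]) (hA : ArnoldiData n m (k - 1) A V h)
    (W : Matrix (Fin n) (Fin m) ℍ[ℝ])
    (hW : W = A * V k -
        ∑ i ∈ Finset.Icc 1 k, qsmul (V i) (Matrix.trace ((V i)ᴴ * (A * V k))))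
    (Hk : Matrix (Fin k) (Fin k) ℍ[ℝ])
    (hHk : ∀ i j : Fin k, Hk i j =
      if (j : ℕ) + 1 < (i : ℕ) then 0
      else Matrix.trace ((V ((i : ℕ) + 1))ᴴ * (A * V ((j : ℕ) + 1)))) :
    (W = 0 ↔
      ∃ y : ℕ → ℍ[ℝ],
        A * (X₀ + ∑ j ∈ Finset.Icc 1 k, qsmul (V j) (y j)) = B) ∧
    (W = 0 →
      IsUnit Hk ∧
      A * (X₀ + ∑ j : Fin k,
        qsmul (V ((j : ℕ) + 1))
          ((β : ℍ[ℝ]) *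
            (Ring.inverse Hk *ᵥ fun i : Fin k => if i = ⟨0, hk⟩ then 1 else 0) j)) = B) := by
  classical
  have hβR : β ≠ 0 := ne_of_gt hβpos
  have hβne : (β : ℍ[ℝ]) ≠ 0 := fun hc =>
    hβR (Quaternion.coe_injective (hc.trans Quaternion.coe_zero.symm))
  have hR0V1 : qsmul (V 1) ((β : ℍ[ℝ])) = R₀ := by
    rw [hV1, qsmul_qsmul, inv_mul_cancel₀ hβne, qsmul_one]
  -- orthonormality of V 1, ..., V k
  have ortho : ∀ j, 1 ≤ j → j ≤ k →
      ∀ p, 1 ≤ p → p ≤ j → ∀ q, 1 ≤ q → q ≤ j →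
      ip (V p) (V q) = if p = q then 1 else 0 := by
    intro j hj1
    induction j, hj1 using Nat.le_induction with
    | base =>
      intro _ p hp1 hp2 q hq1 hq2
      have hp : p = 1 := le_antisymm hp2 hp1
      have hq : q = 1 := le_antisymm hq2 hq1
      subst hp; subst hq
      rw [if_pos rfl, ip_self_coe, hA.normV1]
      norm_num
    | succ j hj1 IH =>
      intro hjk
      have IH' := IH (by omega)
      have hjm : j ∈ Finset.Icc 1 (k - 1) := by rw [Finset.mem_Icc]; omega
      set Wj := A * V j - ∑ i ∈ Finset.Icc 1 j, qsmul (V i) (h i j) with hWjdef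
      have hipW : ∀ p, 1 ≤ p → p ≤ j → ip (V p) Wj = 0 := by
        intro p hp1 hpj
        rw [hWjdef, ip_sub_right, ip_sum_right]
        have h1 : ip (V p) (A * V j) = h p j :=
          (hA.hdef j hjm p (Finset.mem_Icc.mpr ⟨hp1, hpj⟩)).symm
        have h2 : ∑ i ∈ Finset.Icc 1 j, ip (V p) (qsmul (V i) (h i j)) = h p j := by
          rw [Finset.sum_eq_single_of_mem p (Finset.mem_Icc.mpr ⟨hp1, hpj⟩)]
          · rw [ip_qsmul_right, IH' p hp1 hpj p hp1 hpj, if_pos rfl, one_mul]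
          · intro i hi hne
            rw [Finset.mem_Icc] at hi
            rw [ip_qsmul_right, IH' p hp1 hpj i hi.1 hi.2,
              if_neg (fun hh => hne hh.symm), zero_mul]
        rw [h1, h2, sub_self]
      have hqn : h (j+1) j = ((qnorm Wj : ℝ) : ℍ[ℝ]) := hA.hsub j hjm
      have hhne : h (j+1) j ≠ 0 := hA.hsub_ne j hjm
      have hqne : qnorm Wj ≠ 0 := by
        intro h0
        exact hhne (by rw [hqn, h0, Quaternion.coe_zero])
      have hVj : V (j+1) = qsmul Wj (h (j+1) j)⁻¹ := hA.vdef j hjm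
      have hzero : ∀ p, 1 ≤ p → p ≤ j → ip (V p) (V (j+1)) = 0 := by
        intro p hp1 hpj
        rw [hVj, ip_qsmul_right, hipW p hp1 hpj, zero_mul]
      have hone : ip (V (j+1)) (V (j+1)) = 1 := by
        rw [hVj, ip_qsmul_left, ip_qsmul_right, ip_self_coe, hqn,
          ← Quaternion.coe_inv, Quaternion.star_coe, ← Quaternion.coe_mul,
          ← Quaternion.coe_mul]
        have hr : (qnorm Wj)⁻¹ * (qnorm Wj ^ 2 * (qnorm Wj)⁻¹) = 1 := by
          rw [pow_two, mul_inv_cancel_right₀ hqne, inv_mul_cancel₀ hqne]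
        rw [hr, Quaternion.coe_one]
      intro p hp1 hpj1 q hq1 hqj1
      by_cases hp : p ≤ j <;> by_cases hq : q ≤ j
      · exact IH' p hp1 hp q hq1 hq
      · have hq' : q = j + 1 := by omega
        subst hq'
        rw [hzero p hp1 hp, if_neg (by omega)]
      · have hp' : p = j + 1 := by omega
        subst hp'
        rw [ip_star, hzero q hq1 hq, star_zero, if_neg (by omega)]
      · have hp' : p = j + 1 := by omega
        have hq' : q = j + 1 := by omega
        subst hp'; subst hq'
        rw [hone, if_pos rfl]
  -- the Arnoldi relation
  have hAV : ∀ j, 1 ≤ j → j + 1 ≤ k →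
      A * V j = ∑ i ∈ Finset.Icc 1 (j+1), qsmul (V i) (h i j) := by
    intro j hj1 hjk
    have hjm : j ∈ Finset.Icc 1 (k - 1) := by rw [Finset.mem_Icc]; omega
    have hhne := hA.hsub_ne j hjm
    have hq : qsmul (V (j+1)) (h (j+1) j)
        = A * V j - ∑ i ∈ Finset.Icc 1 j, qsmul (V i) (h i j) := by
      rw [hA.vdef j hjm, qsmul_qsmul, inv_mul_cancel₀ hhne, qsmul_one]
    rw [Finset.sum_Icc_succ_top (by omega : 1 ≤ j + 1), hq]
    abel
  have hcoef : ∀ p, 1 ≤ p → p ≤ k → ∀ j, 1 ≤ j → j + 1 ≤ k →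
      ip (V p) (A * V j) = if p ≤ j + 1 then h p j else 0 := by
    intro p hp1 hpk j hj1 hjk
    rw [hAV j hj1 hjk, ip_sum_right]
    by_cases hple : p ≤ j + 1
    · rw [if_pos hple, Finset.sum_eq_single_of_mem p (Finset.mem_Icc.mpr ⟨hp1, hple⟩)]
      · rw [ip_qsmul_right, ortho k hk le_rfl p hp1 hpk p hp1 hpk, if_pos rfl, one_mul]
      · intro i hi hne
        rw [Finset.mem_Icc] at hi
        rw [ip_qsmul_right, ortho k hk le_rfl p hp1 hpk i hi.1 (by omega),
          if_neg (fun hh => hne hh.symm), zero_mul]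
    · rw [if_neg hple]
      apply Finset.sum_eq_zero
      intro i hi
      rw [Finset.mem_Icc] at hi
      rw [ip_qsmul_right, ortho k hk le_rfl p hp1 hpk i hi.1 (by omega),
        if_neg (by omega), zero_mul]
  have hW' : W = A * V k - ∑ i ∈ Finset.Icc 1 k, qsmul (V i) (ip (V i) (A * V k)) := by
    simp only [ip_def]; exact hW
  have hWo : ∀ p, 1 ≤ p → p ≤ k → ip (V p) W = 0 := by
    intro p hp1 hpk
    rw [hW', ip_sub_right, ip_sum_right]
    rw [Finset.sum_eq_single_of_mem p (Finset.mem_Icc.mpr ⟨hp1, hpk⟩)]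
    · rw [ip_qsmul_right, ortho k hk le_rfl p hp1 hpk p hp1 hpk, if_pos rfl, one_mul,
        sub_self]
    · intro i hi hne
      rw [Finset.mem_Icc] at hi
      rw [ip_qsmul_right, ortho k hk le_rfl p hp1 hpk i hi.1 hi.2,
        if_neg (fun hh => hne hh.symm), zero_mul]
  have hWo' : ∀ p, 1 ≤ p → p ≤ k → ip W (V p) = 0 := fun p hp1 hpk => by
    rw [ip_star, hWo p hp1 hpk, star_zero]
  have hipWAVj : ∀ j, 1 ≤ j → j + 1 ≤ k → ip W (A * V j) = 0 := by
    intro j hj1 hjk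
    rw [hAV j hj1 hjk, ip_sum_right]
    apply Finset.sum_eq_zero
    intro i hi
    rw [Finset.mem_Icc] at hi
    rw [ip_qsmul_right, hWo' i hi.1 (by omega), zero_mul]
  have hipWAVk : ip W (A * V k) = ip W W := by
    have hAVkW : A * V k = W + ∑ i ∈ Finset.Icc 1 k, qsmul (V i) (ip (V i) (A * V k)) := by
      rw [hW']; abel
    rw [hAVkW, ip_add_right, ip_sum_right]
    have hz : ∑ i ∈ Finset.Icc 1 k, ip W (qsmul (V i) (ip (V i) (A * V k))) = 0 :=
      Finset.sum_eq_zero fun i hi => by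
        rw [Finset.mem_Icc] at hi
        rw [ip_qsmul_right, hWo' i hi.1 hi.2, zero_mul]
    rw [hz, add_zero]
  -- direction: solution exists → breakdown
  have dir2 : (∃ y : ℕ → ℍ[ℝ],
      A * (X₀ + ∑ j ∈ Finset.Icc 1 k, qsmul (V j) (y j)) = B) → W = 0 := by
    rintro ⟨y, hy⟩
    by_contra hWne
    have hipWW : ip W W ≠ 0 := fun h0 => hWne (ip_self_eq_zero.mp h0)
    have hsum : ∑ j ∈ Finset.Icc 1 k, qsmul (A * V j) (y j) = R₀ := by
      rw [Matrix.mul_add, Matrix.mul_sum] at hy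
      simp only [mul_qsmul] at hy
      rw [hR₀]
      exact eq_sub_of_add_eq' hy
    have hyzero : ∀ d j, 1 ≤ j → j ≤ k → k ≤ j + d → y j = 0 := by
      intro d
      induction d with
      | zero =>
        intro j hj1 hjk hjd
        have hjk' : j = k := by omega
        subst hjk'
        have e1 : ip W R₀ = 0 := by
          rw [← hR0V1, ip_qsmul_right, hWo' 1 le_rfl hk, zero_mul]
        have e2 : ip W R₀ = ip W W * y j := by
          rw [← hsum, ip_sum_right,
            Finset.sum_eq_single_of_mem j (Finset.mem_Icc.mpr ⟨hj1, le_rfl⟩)]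
          · rw [ip_qsmul_right, hipWAVk]
          · intro i hi hne
            rw [Finset.mem_Icc] at hi
            rw [ip_qsmul_right, hipWAVj i hi.1 (by omega), zero_mul]
        rcases mul_eq_zero.mp (e2.symm.trans e1) with hc | hc
        · exact absurd hc hipWW
        · exact hc
      | succ d IHd =>
        intro j hj1 hjk hjd
        by_cases hcase : k ≤ j + d
        · exact IHd j hj1 hjk hcase
        · have hjlt : j + 1 ≤ k := by omega
          have e1 : ip (V (j+1)) R₀ = 0 := by
            rw [← hR0V1, ip_qsmul_right,
              ortho k hk le_rfl (j+1) (by omega) hjlt 1 le_rfl hk,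
              if_neg (by omega), zero_mul]
          have e2 : ip (V (j+1)) R₀ = h (j+1) j * y j := by
            rw [← hsum, ip_sum_right,
              Finset.sum_eq_single_of_mem j (Finset.mem_Icc.mpr ⟨hj1, hjk⟩)]
            · rw [ip_qsmul_right, hcoef (j+1) (by omega) hjlt j hj1 hjlt,
                if_pos (by omega)]
            · intro i hi hne
              rw [Finset.mem_Icc] at hi
              rcases lt_or_gt_of_ne hne with hlt | hgt
              · rw [ip_qsmul_right,
                  hcoef (j+1) (by omega) hjlt i hi.1 (by omega),
                  if_neg (by omega), zero_mul]
              · rw [IHd i hi.1 hi.2 (by omega), qsmul_zero, ip_zero_right]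
          rcases mul_eq_zero.mp (e2.symm.trans e1) with hc | hc
          · exact absurd hc (hA.hsub_ne j (Finset.mem_Icc.mpr ⟨hj1, by omega⟩))
          · exact hc
    have hR0 : R₀ = 0 := by
      rw [← hsum]
      apply Finset.sum_eq_zero
      intro j hj
      rw [Finset.mem_Icc] at hj
      rw [hyzero k j hj.1 hj.2 (by omega), qsmul_zero]
    rw [hβ, hR0, qnorm_zero] at hβpos
    exact lt_irrefl 0 hβpos
  -- breakdown part
  have partB : W = 0 → IsUnit Hk ∧ A * (X₀ + ∑ j : Fin k,
        qsmul (V ((j : ℕ) + 1))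
          ((β : ℍ[ℝ]) *
            (Ring.inverse Hk *ᵥ fun i : Fin k => if i = ⟨0, hk⟩ then 1 else 0) j)) = B := by
    intro hW0
    have hAVk : A * V k = ∑ i ∈ Finset.Icc 1 k, qsmul (V i) (ip (V i) (A * V k)) := by
      have h1 := hW'
      rw [hW0] at h1
      exact sub_eq_zero.mp h1.symm
    have hHkT : ∀ i j : Fin k, Hk i j = ip (V ((i:ℕ)+1)) (A * V ((j:ℕ)+1)) := by
      intro i j
      have hik := i.isLt
      have hjk2 := j.isLt
      rw [hHk i j]
      by_cases hc : (j : ℕ) + 1 < (i : ℕ)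
      · rw [if_pos hc]
        have hc2 := hcoef ((i:ℕ)+1) (by omega) (by omega) ((j:ℕ)+1) (by omega) (by omega)
        rw [hc2, if_neg (by omega)]
      · rw [if_neg hc]; rfl
    have hAVfull : ∀ j : Fin k,
        A * V ((j:ℕ)+1) = ∑ i : Fin k, qsmul (V ((i:ℕ)+1)) (Hk i j) := by
      intro j
      have hjk2 := j.isLt
      by_cases hc : (j:ℕ) + 1 = k
      · rw [hc, hAVk, sum_Icc_one k (fun i => qsmul (V i) (ip (V i) (A * V k)))]
        refine Finset.sum_congr rfl fun i _ => ?_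
        rw [hHkT i j, hc]
      · have hj2 : (j:ℕ) + 1 + 1 ≤ k := by omega
        rw [hAV ((j:ℕ)+1) (by omega) hj2]
        have hHval : ∀ i : Fin k, Hk i j =
            if (i:ℕ) + 1 ≤ (j:ℕ) + 1 + 1 then h ((i:ℕ)+1) ((j:ℕ)+1) else 0 := by
          intro i
          have hik := i.isLt
          rw [hHkT i j, hcoef ((i:ℕ)+1) (by omega) (by omega) ((j:ℕ)+1) (by omega) hj2]
        calc ∑ i ∈ Finset.Icc 1 ((j:ℕ)+1+1), qsmul (V i) (h i ((j:ℕ)+1))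
            = ∑ i ∈ Finset.Icc 1 ((j:ℕ)+1+1),
                qsmul (V i) (if i ≤ (j:ℕ)+1+1 then h i ((j:ℕ)+1) else 0) := by
              refine Finset.sum_congr rfl fun i hi => ?_
              rw [Finset.mem_Icc] at hi
              rw [if_pos hi.2]
          _ = ∑ i ∈ Finset.Icc 1 k,
                qsmul (V i) (if i ≤ (j:ℕ)+1+1 then h i ((j:ℕ)+1) else 0) := by
              apply Finset.sum_subset (Finset.Icc_subset_Icc_right hj2)
              intro x hx hnx
              rw [Finset.mem_Icc] at hx
              have hxle : ¬ x ≤ (j:ℕ)+1+1 := fun hle =>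
                hnx (Finset.mem_Icc.mpr ⟨hx.1, hle⟩)
              rw [if_neg hxle, qsmul_zero]
          _ = ∑ i : Fin k, qsmul (V ((i:ℕ)+1))
                (if (i:ℕ)+1 ≤ (j:ℕ)+1+1 then h ((i:ℕ)+1) ((j:ℕ)+1) else 0) :=
              sum_Icc_one k _
          _ = ∑ i : Fin k, qsmul (V ((i:ℕ)+1)) (Hk i j) := by
              refine Finset.sum_congr rfl fun i _ => ?_
              rw [← hHval i]
    have hApply : ∀ c : Fin k → ℍ[ℝ],
        A * (∑ j : Fin k, qsmul (V ((j:ℕ)+1)) (c j))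
          = ∑ i : Fin k, qsmul (V ((i:ℕ)+1)) ((Hk *ᵥ c) i) := by
      intro c
      rw [Matrix.mul_sum]
      calc ∑ j : Fin k, A * qsmul (V ((j:ℕ)+1)) (c j)
          = ∑ j : Fin k, qsmul (A * V ((j:ℕ)+1)) (c j) :=
            Finset.sum_congr rfl fun j _ => mul_qsmul A _ _
        _ = ∑ j : Fin k, ∑ i : Fin k, qsmul (V ((i:ℕ)+1)) (Hk i j * c j) := by
            refine Finset.sum_congr rfl fun j _ => ?_
            rw [hAVfull j, qsmul_sum_left]
            exact Finset.sum_congr rfl fun i _ => qsmul_qsmul _ _ _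
        _ = ∑ i : Fin k, ∑ j : Fin k, qsmul (V ((i:ℕ)+1)) (Hk i j * c j) :=
            Finset.sum_comm
        _ = ∑ i : Fin k, qsmul (V ((i:ℕ)+1)) ((Hk *ᵥ c) i) := by
            refine Finset.sum_congr rfl fun i _ => ?_
            rw [qsmul_sum_right]
            rfl
    have hUnit : IsUnit Hk := by
      apply isUnit_of_mulVec_inj
      intro c hc
      have hz : A * (∑ j : Fin k, qsmul (V ((j:ℕ)+1)) (c j)) = 0 := by
        rw [hApply, hc]
        exact Finset.sum_eq_zero fun i _ => by rw [Pi.zero_apply, qsmul_zero]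
      obtain ⟨u, hu⟩ := hAinv
      have hinv : u.inv * A = 1 := by rw [← hu]; exact u.inv_val
      have hZ0 : (∑ j : Fin k, qsmul (V ((j:ℕ)+1)) (c j)) = 0 := by
        have h2 : u.inv * (A * (∑ j : Fin k, qsmul (V ((j:ℕ)+1)) (c j))) = 0 := by
          rw [hz, Matrix.mul_zero]
        rwa [← Matrix.mul_assoc, hinv, Matrix.one_mul] at h2
      funext i
      have hik := i.isLt
      have hci : ip (V ((i:ℕ)+1)) (∑ j : Fin k, qsmul (V ((j:ℕ)+1)) (c j)) = c i := by
        rw [ip_sum_right, Finset.sum_eq_single_of_mem i (Finset.mem_univ i)]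
        · rw [ip_qsmul_right,
            ortho k hk le_rfl ((i:ℕ)+1) (by omega) (by omega) ((i:ℕ)+1) (by omega) (by omega),
            if_pos rfl, one_mul]
        · intro b _ hbne
          have hbk := b.isLt
          rw [ip_qsmul_right,
            ortho k hk le_rfl ((i:ℕ)+1) (by omega) (by omega) ((b:ℕ)+1) (by omega) (by omega),
            if_neg (fun hh => hbne (Fin.ext (by omega : (b:ℕ) = (i:ℕ)))), zero_mul]
      rw [hZ0, ip_zero_right] at hci
      exact hci.symm
    have solve : ∀ c : Fin k → ℍ[ℝ],
        (Hk *ᵥ c = fun i : Fin k => if i = ⟨0, hk⟩ then (β : ℍ[ℝ]) else 0) →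
        A * (X₀ + ∑ j : Fin k, qsmul (V ((j:ℕ)+1)) (c j)) = B := by
      intro c hc
      rw [Matrix.mul_add, hApply c, hc]
      have hsum1 : ∑ i : Fin k, qsmul (V ((i:ℕ)+1))
          (if i = ⟨0, hk⟩ then (β : ℍ[ℝ]) else 0) = R₀ := by
        rw [Finset.sum_eq_single_of_mem (⟨0, hk⟩ : Fin k) (Finset.mem_univ _)]
        · rw [if_pos rfl]
          exact hR0V1
        · intro b _ hbne
          rw [if_neg hbne, qsmul_zero]
      rw [hsum1, hR₀]
      abel
    refine ⟨hUnit, ?_⟩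
    apply solve
    have hsm : (fun j : Fin k => (β : ℍ[ℝ]) *
        (Ring.inverse Hk *ᵥ fun i : Fin k => if i = ⟨0, hk⟩ then 1 else 0) j)
        = β • (Ring.inverse Hk *ᵥ fun i : Fin k => if i = ⟨0, hk⟩ then (1:ℍ[ℝ]) else 0) := by
      funext j
      rw [Pi.smul_apply, ← Quaternion.coe_mul_eq_smul]
    rw [hsm, Matrix.mulVec_smul, Matrix.mulVec_mulVec, Ring.mul_inverse_cancel Hk hUnit,
      Matrix.one_mulVec]
    funext i
    rw [Pi.smul_apply, ← Quaternion.coe_mul_eq_smul]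
    by_cases hi : i = (⟨0, hk⟩ : Fin k)
    · rw [if_pos hi, if_pos hi, mul_one]
    · rw [if_neg hi, if_neg hi, mul_zero]
  refine ⟨⟨fun hW0 => ?_, dir2⟩, partB⟩
  obtain ⟨hU, hsol⟩ := partB hW0
  refine ⟨(fun jj => if hj : jj - 1 < k then
      (β : ℍ[ℝ]) * (Ring.inverse Hk *ᵥ fun i : Fin k => if i = ⟨0, hk⟩ then 1 else 0)
        ⟨jj - 1, hj⟩
    else 0), ?_⟩
  have hsum2 : (∑ j ∈ Finset.Icc 1 k, qsmul (V j) ((fun jj => if hj : jj - 1 < k then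
      (β : ℍ[ℝ]) * (Ring.inverse Hk *ᵥ fun i : Fin k => if i = ⟨0, hk⟩ then 1 else 0)
        ⟨jj - 1, hj⟩
    else 0) j)) = ∑ j : Fin k, qsmul (V ((j : ℕ) + 1))
          ((β : ℍ[ℝ]) *
            (Ring.inverse Hk *ᵥ fun i : Fin k => if i = ⟨0, hk⟩ then 1 else 0) j) := by
    rw [sum_Icc_one k]
    refine Finset.sum_congr rfl fun j _ => ?_
    simp only [Nat.add_sub_cancel]
    rw [dif_pos j.isLt]
  rw [hsum2]
  exact hsol
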